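/- With c = Re β and b = Im β as above, c′ and b′ are strictly decreasing on (0,π), with boundary values c′(0⁺)=1/2, c′(π⁻)=0, b′(0⁺)=√3/2, b′(π⁻)=0. -/

import Mathlib

open Real Set Filter Topology

namespace DRIB

noncomputable def D (t : ℝ) : ℝ := t^2 + 2*t + 4

lemma D_pos (t : ℝ) : 0 < D t := by unfold D; nlinarith [sq_nonneg (t+1)]

lemma sqrtD_pos (t : ℝ) : 0 < Real.sqrt (D t) := Real.sqrt_pos.2 (D_pos t)

lemma sqrtD_sq (t : ℝ) : Real.sqrt (D t) * Real.sqrt (D t) = D t :=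
  Real.mul_self_sqrt (D_pos t).le

lemma sqrtD_gt (t : ℝ) (ht : 0 ≤ t) : 1 + t < Real.sqrt (D t) := by
  have := Real.lt_sqrt (x := 1 + t) (y := D t) (by positivity)
  rw [this]; unfold D; nlinarith

lemma sqrtD_ge_two (t : ℝ) (ht : 0 ≤ t) : 2 ≤ Real.sqrt (D t) := by
  rw [show (2:ℝ) = Real.sqrt 4 by
    rw [show (4:ℝ) = 2^2 by norm_num, Real.sqrt_sq (by norm_num)]]
  exact Real.sqrt_le_sqrt (by unfold D; nlinarith)

lemma sqrtD_key (t : ℝ) : (Real.sqrt (D t) - 1 - t) * (Real.sqrt (D t) + 1 + t) = 3 := by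
  have h := sqrtD_sq t
  unfold D at h ⊢
  linear_combination h

noncomputable def Cf (t : ℝ) : ℝ :=
  Real.sqrt ((2 - t) * (Real.sqrt (D t) - 1 - t) / (2 * D t))

noncomputable def Bf (t : ℝ) : ℝ :=
  Real.sqrt ((2 - t) * (Real.sqrt (D t) + 1 + t) / (2 * D t))

lemma D_mono {s t : ℝ} (hs : 0 ≤ s) (hst : s < t) : D s < D t := by
  unfold D
  nlinarith [mul_pos (sub_pos.2 hst) (show (0:ℝ) < t + s + 2 by linarith)]

lemma Cf_strictAnti : StrictAntiOn Cf (Icc (0:ℝ) 2) := by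
  intro s hs t ht hst
  unfold Cf
  apply Real.sqrt_lt_sqrt
  · have h1 := sqrtD_gt t ht.1
    have h2 := D_pos t
    have h3 : 0 ≤ Real.sqrt (D t) - 1 - t := by linarith
    have h4 : 0 ≤ 2 - t := by linarith [ht.2]
    positivity
  have key : ∀ u : ℝ, 0 ≤ u → (2 - u) * (Real.sqrt (D u) - 1 - u) / (2 * D u)
      = 3 * (2 - u) / (2 * D u * (Real.sqrt (D u) + 1 + u)) := by
    intro u hu
    have h1 := sqrtD_gt u hu
    have h2 := D_pos u
    have h5 := sqrtD_key u
    rw [div_eq_div_iff (by positivity) (by positivity)]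
    linear_combination ((2 - u) * (2 * D u)) * h5
  rw [key s hs.1, key t ht.1]
  have hDs := D_pos s
  have hDt := D_pos t
  have h1 := sqrtD_gt s hs.1
  have h2 := sqrtD_gt t ht.1
  have hs0 := hs.1
  have ht0 := ht.1
  have hds : 0 < 2 * D s * (Real.sqrt (D s) + 1 + s) :=
    mul_pos (by linarith) (by linarith)
  have hdt : 0 < 2 * D t * (Real.sqrt (D t) + 1 + t) :=
    mul_pos (by linarith) (by linarith)
  rw [div_lt_div_iff₀ hdt hds]
  have hDm := D_mono hs.1 hst
  have hsq : Real.sqrt (D s) ≤ Real.sqrt (D t) := Real.sqrt_le_sqrt hDm.le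
  have hle : 2 * D s * (Real.sqrt (D s) + 1 + s) ≤ 2 * D t * (Real.sqrt (D t) + 1 + t) :=
    mul_le_mul (by linarith) (by linarith) (by linarith) (by linarith)
  calc 3 * (2 - t) * (2 * D s * (Real.sqrt (D s) + 1 + s))
      ≤ 3 * (2 - t) * (2 * D t * (Real.sqrt (D t) + 1 + t)) := by
        apply mul_le_mul_of_nonneg_left hle (by linarith [ht.2])
    _ < 3 * (2 - s) * (2 * D t * (Real.sqrt (D t) + 1 + t)) := by
        apply mul_lt_mul_of_pos_right (by linarith) hdt

lemma Bf_strictAnti : StrictAntiOn Bf (Icc (0:ℝ) 2) := by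
  intro s hs t ht hst
  unfold Bf
  apply Real.sqrt_lt_sqrt
  · have h1 := sqrtD_pos t
    have h2 := D_pos t
    have h3 : 0 ≤ 2 - t := by linarith [ht.2]
    have h4 : 0 ≤ Real.sqrt (D t) + 1 + t := by linarith [ht.1]
    positivity
  have key : ∀ u : ℝ, 0 ≤ u → (2 - u) * (Real.sqrt (D u) + 1 + u) / (2 * D u)
      = (2 - u) / (2 * Real.sqrt (D u)) + (2 + u - u^2) / (2 * D u) := by
    intro u hu
    have h2 := D_pos u
    have h3 := sqrtD_pos u
    have h4 := sqrtD_sq u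
    rw [div_add_div _ _ (by positivity) (by positivity), div_eq_div_iff (by positivity) (by positivity)]
    linear_combination (4 * D u * (2 - u)) * h4
  rw [key s hs.1, key t ht.1]
  have hDs := D_pos s
  have hDt := D_pos t
  have h1 := sqrtD_pos s
  have h2 := sqrtD_pos t
  have hDm := D_mono hs.1 hst
  have hsq : Real.sqrt (D s) ≤ Real.sqrt (D t) := Real.sqrt_le_sqrt hDm.le
  have term1 : (2 - t) / (2 * Real.sqrt (D t)) ≤ (2 - s) / (2 * Real.sqrt (D s)) := by
    apply div_le_div₀ (by linarith [hs.2, hst]) (by linarith [ht.2]) (by linarith) (by linarith)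
  have term2 : (2 + t - t^2) / (2 * D t) < (2 + s - s^2) / (2 * D s) := by
    rw [div_lt_div_iff₀ (by linarith) (by linarith)]
    have key2 : (2 + s - s^2) * D t - (2 + t - t^2) * D s
        = 3 * (t - s) * (2*t + 2*s + s*t) := by unfold D; ring
    have pos3 : 0 < 3 * (t - s) * (2*t + 2*s + s*t) := by
      have h5 : 0 < 2*t + 2*s + s*t := by nlinarith [hs.1, ht.1, mul_nonneg hs.1 ht.1]
      have h6 : 0 < t - s := by linarith
      positivity
    nlinarith [key2, pos3]
  linarith

lemma sqrtD_zero : Real.sqrt (D 0) = 2 := by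
  rw [show D 0 = 2^2 by norm_num [D], Real.sqrt_sq (by norm_num)]

lemma Cf_zero : Cf 0 = 1/2 := by
  unfold Cf
  rw [sqrtD_zero, show D 0 = 4 by norm_num [D]]
  rw [show (2-(0:ℝ)) * (2 - 1 - 0) / (2 * 4) = (1/2)^2 by norm_num, Real.sqrt_sq (by norm_num)]

lemma Cf_two : Cf 2 = 0 := by
  unfold Cf; norm_num

lemma Bf_zero : Bf 0 = Real.sqrt 3 / 2 := by
  unfold Bf
  rw [sqrtD_zero, show D 0 = 4 by norm_num [D]]
  have h : ((Real.sqrt 3)/2)^2 = (2-(0:ℝ)) * (2 + 1 + 0) / (2 * 4) := by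
    rw [div_pow, Real.sq_sqrt (by norm_num : (0:ℝ) ≤ 3)]; norm_num
  rw [← h, Real.sqrt_sq (by positivity)]

lemma Bf_two : Bf 2 = 0 := by
  unfold Bf; norm_num

lemma Cf_contAt (t : ℝ) : ContinuousAt Cf t := by
  unfold Cf D
  have h := D_pos t
  apply Real.continuous_sqrt.continuousAt.comp
  apply ContinuousAt.div (by fun_prop) (by fun_prop)
  unfold D at h; positivity

lemma Bf_contAt (t : ℝ) : ContinuousAt Bf t := by
  unfold Bf D
  have h := D_pos t
  apply Real.continuous_sqrt.continuousAt.comp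
  apply ContinuousAt.div (by fun_prop) (by fun_prop)
  unfold D at h; positivity


set_option maxHeartbeats 1000000 in
lemma deriv_eq (β : ℝ → ℂ)
    (hdiff : ∀ φ ∈ Ioo (0:ℝ) π, DifferentiableAt ℝ β φ)
    (hcos : ∀ φ ∈ Icc (0:ℝ) π, Complex.cos (β φ) =
      1 + ((Real.cos φ : ℂ) - 1) * Complex.exp (2 * Real.pi * Complex.I / 3))
    (him : ∀ φ ∈ Ioo (0:ℝ) π, 0 < (β φ).im)
    {φ : ℝ} (hφ : φ ∈ Ioo 0 π) :
    deriv (fun x => (β x).re) φ = Cf (1 - Real.cos φ) ∧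
    deriv (fun x => (β x).im) φ = Bf (1 - Real.cos φ) := by
  obtain ⟨hφ0, hφπ⟩ := hφ
  have hπ := Real.pi_pos
  have hc1 : Real.cos φ < 1 := by
    have := Real.strictAntiOn_cos ⟨le_refl 0, hπ.le⟩ ⟨hφ0.le, hφπ.le⟩ hφ0
    rwa [Real.cos_zero] at this
  have hcm1 : -1 < Real.cos φ := by
    have := Real.strictAntiOn_cos ⟨hφ0.le, hφπ.le⟩ ⟨hπ.le, le_refl π⟩ hφπ
    rwa [Real.cos_pi] at this
  obtain ⟨t, htdef⟩ : ∃ t, t = 1 - Real.cos φ := ⟨_, rfl⟩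
  have hcφ : Real.cos φ = 1 - t := by rw [htdef]; ring
  have ht0 : 0 < t := by rw [htdef]; linarith
  have ht2 : t < 2 := by rw [htdef]; linarith
  obtain ⟨SD, hSDdef⟩ : ∃ x, x = Real.sqrt (D t) := ⟨_, rfl⟩
  have hSDge : 2 ≤ SD := hSDdef ▸ sqrtD_ge_two t ht0.le
  have hSDgt : 1 + t < SD := hSDdef ▸ sqrtD_gt t ht0.le
  have hDD' : SD * SD = t^2 + 2*t + 4 := by
    rw [hSDdef, sqrtD_sq]; rfl
  obtain ⟨p, hpdef⟩ : ∃ x, x = Real.sqrt (t*(2*SD + t - 2)) / 2 := ⟨_, rfl⟩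
  obtain ⟨q, hqdef⟩ : ∃ x, x = Real.sqrt (t*(2*SD + 2 - t)) / 2 := ⟨_, rfl⟩
  have hargp : 0 < t*(2*SD + t - 2) := mul_pos ht0 (by linarith)
  have hargq : 0 < t*(2*SD + 2 - t) := mul_pos ht0 (by linarith)
  have hp0 : 0 < p := by rw [hpdef]; positivity
  have hq0 : 0 < q := by rw [hqdef]; positivity
  have hp2 : p^2 = t*(2*SD + t - 2)/4 := by
    rw [hpdef, div_pow, Real.sq_sqrt hargp.le]; norm_num
  have hq2 : q^2 = t*(2*SD + 2 - t)/4 := by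
    rw [hqdef, div_pow, Real.sq_sqrt hargq.le]; norm_num
  have h33 : Real.sqrt 3 * Real.sqrt 3 = 3 := Real.mul_self_sqrt (by norm_num)
  have hpq : p * q = Real.sqrt 3 * (t*(t+2))/4 := by
    rw [hpdef, hqdef, div_mul_div_comm, ← Real.sqrt_mul hargp.le]
    rw [show t*(2*SD+t-2)*(t*(2*SD+2-t)) = 3*(t*(t+2))^2 from by
      linear_combination (4*t^2)*hDD']
    rw [Real.sqrt_mul (by norm_num : (0:ℝ) ≤ 3), Real.sqrt_sq (by positivity)]
    ring
  have hppqq : p^2 + q^2 = t * SD := by rw [hp2, hq2]; ring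
  obtain ⟨ω, hωeq⟩ : ∃ w, w = Complex.exp (2 * Real.pi * Complex.I / 3) := ⟨_, rfl⟩
  have hωval : ω = Complex.ofReal (-(1/2)) + Complex.ofReal (Real.sqrt 3/2) * Complex.I := by
    have hc23 : Real.cos (2*π/3) = -(1/2) := by
      rw [show 2*π/3 = π - π/3 by ring, Real.cos_pi_sub, Real.cos_pi_div_three]
    have hs23 : Real.sin (2*π/3) = Real.sqrt 3/2 := by
      rw [show 2*π/3 = π - π/3 by ring, Real.sin_pi_sub, Real.sin_pi_div_three]
    rw [hωeq, show (2 * (Real.pi:ℂ) * Complex.I / 3) = ((2*π/3 : ℝ):ℂ) * Complex.I by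
      push_cast; ring]
    rw [Complex.exp_mul_I, ← Complex.ofReal_cos, ← Complex.ofReal_sin, hc23, hs23]
  have hωre : ω.re = -(1/2) := by rw [hωval]; simp
  have hωim : ω.im = Real.sqrt 3/2 := by rw [hωval]; simp
  have hmem : φ ∈ Icc (0:ℝ) π := ⟨hφ0.le, hφπ.le⟩
  have hw : Complex.cos (β φ) = 1 - (t:ℂ) * ω := by
    rw [hcos φ hmem, ← hωeq, show ((Real.cos φ : ℝ):ℂ) = 1 - (t:ℂ) from by
      rw [hcφ]; push_cast; ring]
    ring
  have hb : 0 < (β φ).im := him φ ⟨hφ0, hφπ⟩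
  have hsinh : 0 < Real.sinh ((β φ).im) := Real.sinh_pos_iff.2 hb
  have hcim : (Complex.cos (β φ)).im = -(Real.sin ((β φ).re) * Real.sinh ((β φ).im)) := by
    rw [Complex.cos_eq]
    simp [Complex.cos_ofReal_re, Complex.cos_ofReal_im, Complex.sin_ofReal_re,
      Complex.sin_ofReal_im, Complex.cosh_ofReal_re, Complex.cosh_ofReal_im,
      Complex.sinh_ofReal_re, Complex.sinh_ofReal_im]
  have hcim2 : (Complex.cos (β φ)).im = -(Real.sqrt 3/2 * t) := by
    rw [hw]
    simp only [Complex.sub_im, Complex.one_im, Complex.mul_im, Complex.ofReal_re,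
      Complex.ofReal_im, hωre, hωim]
    ring
  have hsinc : 0 < Real.sin ((β φ).re) := by
    have h1 : Real.sin ((β φ).re) * Real.sinh ((β φ).im) = Real.sqrt 3/2 * t := by
      have h2 := hcim.symm.trans hcim2
      linarith
    have h3 : 0 < Real.sqrt 3/2 * t := by positivity
    by_contra h
    push_neg at h
    have h4 := mul_nonpos_of_nonpos_of_nonneg h hsinh.le
    linarith
  have hresin : 0 < (Complex.sin (β φ)).re := by
    have hre : (Complex.sin (β φ)).re = Real.sin ((β φ).re) * Real.cosh ((β φ).im) := by
      rw [Complex.sin_eq]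
      simp [Complex.cos_ofReal_re, Complex.cos_ofReal_im, Complex.sin_ofReal_re,
        Complex.sin_ofReal_im, Complex.cosh_ofReal_re, Complex.cosh_ofReal_im,
        Complex.sinh_ofReal_re, Complex.sinh_ofReal_im]
    rw [hre]
    exact mul_pos hsinc (Real.cosh_pos _)
  obtain ⟨σ, hσdef⟩ : ∃ z : ℂ, z = (p:ℝ) + (q:ℝ) * Complex.I := ⟨_, rfl⟩
  have hσre : σ.re = p := by rw [hσdef]; simp
  have hσim : σ.im = q := by rw [hσdef]; simp
  have hsin2 : Complex.sin (β φ)^2 = σ^2 := by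
    have h1 : Complex.sin (β φ)^2 = 1 - Complex.cos (β φ)^2 := by
      linear_combination Complex.sin_sq_add_cos_sq (β φ)
    rw [h1, hw]
    apply Complex.ext
    · simp only [Complex.sub_re, Complex.one_re, pow_two, Complex.mul_re, Complex.mul_im,
        Complex.sub_im, Complex.one_im, Complex.ofReal_re, Complex.ofReal_im, hωre, hωim,
        hσre, hσim]
      linear_combination hq2 - hp2 + (t^2/4)*h33
    · simp only [Complex.sub_re, Complex.one_re, pow_two, Complex.mul_re, Complex.mul_im,
        Complex.sub_im, Complex.one_im, Complex.ofReal_re, Complex.ofReal_im, hωre, hωim,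
        hσre, hσim]
      linear_combination (-2)*hpq
  have hsinσ : Complex.sin (β φ) = σ := by
    have hfac : (Complex.sin (β φ) - σ) * (Complex.sin (β φ) + σ) = 0 := by
      linear_combination hsin2
    rcases mul_eq_zero.1 hfac with h | h
    · exact sub_eq_zero.1 h
    · exfalso
      have h2 : (Complex.sin (β φ)).re + p = 0 := by
        have h3 := congrArg Complex.re h
        simpa [Complex.add_re, hσre] using h3
      linarith
  -- derivative of β from implicit differentiation
  have hβ' : HasDerivAt β (deriv β φ) φ := (hdiff φ ⟨hφ0, hφπ⟩).hasDerivAt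
  have hchain : HasDerivAt (fun x => Complex.cos (β x))
      (-Complex.sin (β φ) * deriv β φ) φ := by
    have h1 := ((Complex.hasDerivAt_cos (β φ)).complexToReal_fderiv).comp_hasDerivAt φ hβ'
    simpa [Function.comp_def, smul_eq_mul, mul_comm] using h1
  have hg : HasDerivAt (fun x : ℝ => (1:ℂ) + ((Real.cos x : ℂ) - 1) * Complex.exp (2 * Real.pi * Complex.I / 3))
      (((-Real.sin φ : ℝ) : ℂ) * Complex.exp (2 * Real.pi * Complex.I / 3)) φ := by
    have h1 : HasDerivAt (fun x : ℝ => ((Real.cos x : ℝ) : ℂ)) ((-Real.sin φ : ℝ) : ℂ) φ :=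
      (Real.hasDerivAt_cos φ).ofReal_comp
    simpa using ((h1.sub_const 1).mul_const (Complex.exp (2 * Real.pi * Complex.I / 3))).const_add 1
  have heq : (fun x => Complex.cos (β x)) =ᶠ[𝓝 φ]
      (fun x : ℝ => (1:ℂ) + ((Real.cos x : ℂ) - 1) * Complex.exp (2 * Real.pi * Complex.I / 3)) := by
    filter_upwards [isOpen_Ioo.mem_nhds (⟨hφ0, hφπ⟩ : φ ∈ Ioo 0 π)] with x hx
    exact hcos x ⟨hx.1.le, hx.2.le⟩
  have hkey : -Complex.sin (β φ) * deriv β φ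
      = ((-Real.sin φ : ℝ) : ℂ) * Complex.exp (2 * Real.pi * Complex.I / 3) :=
    hchain.unique (hg.congr_of_eventuallyEq heq)
  have hσd : σ * deriv β φ = ((Real.sin φ : ℝ) : ℂ) * ω := by
    rw [← hsinσ, hωeq]
    push_cast at hkey ⊢
    linear_combination -hkey
  -- explicit formula for the derivative
  obtain ⟨X, hXdef⟩ : ∃ x, x = Real.sin φ * (Real.sqrt 3 * q - p) / (2*(t*SD)) := ⟨_, rfl⟩
  obtain ⟨Y, hYdef⟩ : ∃ x, x = Real.sin φ * (Real.sqrt 3 * p + q) / (2*(t*SD)) := ⟨_, rfl⟩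
  have hSD0 : 0 < SD := by linarith
  have htSD : (0:ℝ) < 2*(t*SD) := by positivity
  have hXeq : X * (2*(t*SD)) = Real.sin φ * (Real.sqrt 3 * q - p) := by
    rw [hXdef]; field_simp
  have hYeq : Y * (2*(t*SD)) = Real.sin φ * (Real.sqrt 3 * p + q) := by
    rw [hYdef]; field_simp
  have hZσ : σ * ((X:ℂ) + (Y:ℂ) * Complex.I) = ((Real.sin φ : ℝ) : ℂ) * ω := by
    apply Complex.ext
    · simp only [Complex.mul_re, Complex.add_re, Complex.add_im, Complex.mul_im,
        Complex.ofReal_re, Complex.ofReal_im, Complex.I_re, Complex.I_im, hσre, hσim, hωre, hωim]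
      have e1 : p * X - q * Y = -(Real.sin φ)/2 := by
        have h5 : (p * X - q * Y) * (2*(t*SD)) = -(Real.sin φ)/2 * (2*(t*SD)) := by
          have : p * (X * (2*(t*SD))) - q * (Y * (2*(t*SD))) = -(Real.sin φ)/2 * (2*(t*SD)) := by
            rw [hXeq, hYeq]
            linear_combination (-(Real.sin φ)) * hppqq
          linarith [this]
        exact mul_right_cancel₀ (ne_of_gt htSD) h5
      linarith [e1]
    · simp only [Complex.mul_re, Complex.add_re, Complex.add_im, Complex.mul_im,
        Complex.ofReal_re, Complex.ofReal_im, Complex.I_re, Complex.I_im, hσre, hσim, hωre, hωim]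
      have e2 : p * Y + q * X = Real.sin φ * (Real.sqrt 3/2) := by
        have h5 : (p * Y + q * X) * (2*(t*SD)) = Real.sin φ * (Real.sqrt 3/2) * (2*(t*SD)) := by
          have : p * (Y * (2*(t*SD))) + q * (X * (2*(t*SD)))
              = Real.sin φ * (Real.sqrt 3/2) * (2*(t*SD)) := by
            rw [hXeq, hYeq]
            linear_combination (Real.sin φ * Real.sqrt 3) * hppqq
          linarith [this]
        exact mul_right_cancel₀ (ne_of_gt htSD) h5
      linarith [e2]
  have hσ0 : σ ≠ 0 := by
    intro h
    rw [h] at hσim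
    simp at hσim
    linarith
  have hdval : deriv β φ = (X:ℂ) + (Y:ℂ) * Complex.I :=
    mul_left_cancel₀ hσ0 (hσd.trans hZσ.symm)
  have hreD : deriv (fun x => (β x).re) φ = X := by
    have h1 : HasDerivAt (fun x => (β x).re) ((deriv β φ).re) φ := by
      have h2 := (Complex.reCLM.hasFDerivAt (x := β φ)).comp_hasDerivAt φ hβ'
      simpa [Function.comp_def] using h2
    rw [h1.deriv, hdval]
    simp
  have himD : deriv (fun x => (β x).im) φ = Y := by
    have h1 : HasDerivAt (fun x => (β x).im) ((deriv β φ).im) φ := by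
      have h2 := (Complex.imCLM.hasFDerivAt (x := β φ)).comp_hasDerivAt φ hβ'
      simpa [Function.comp_def] using h2
    rw [h1.deriv, hdval]
    simp
  have hsinφ : 0 < Real.sin φ := Real.sin_pos_of_pos_of_lt_pi hφ0 hφπ
  have hsin2φ : Real.sin φ^2 = t*(2-t) := by
    have h := Real.sin_sq_add_cos_sq φ
    rw [hcφ] at h
    linear_combination h
  have hsq3q : (Real.sqrt 3 * q - p)^2 = 2*t*(SD - 1 - t) := by
    linear_combination (q^2 - t*(t+2)/2)*h33 - 2*Real.sqrt 3*hpq + hp2 + 3*hq2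
  have hsq3p : (Real.sqrt 3 * p + q)^2 = 2*t*(SD + 1 + t) := by
    linear_combination (p^2 + t*(t+2)/2)*h33 + 2*Real.sqrt 3*hpq + 3*hp2 + hq2
  have hSDdef' : SD = Real.sqrt (t^2 + 2*t + 4) := by rw [hSDdef]; rfl
  have hX2 : X^2 = (2-t)*(SD-1-t)/(2*(t^2+2*t+4)) := by
    rw [hXdef, div_pow, mul_pow, hsin2φ, hsq3q]
    rw [div_eq_div_iff (by positivity) (by positivity)]
    linear_combination (-(4*t^2*(2-t)*(SD-1-t)))*hDD'
  have hY2 : Y^2 = (2-t)*(SD+1+t)/(2*(t^2+2*t+4)) := by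
    rw [hYdef, div_pow, mul_pow, hsin2φ, hsq3p]
    rw [div_eq_div_iff (by positivity) (by positivity)]
    linear_combination (-(4*t^2*(2-t)*(SD+1+t)))*hDD'
  have h3q : p < Real.sqrt 3 * q := by
    have hlt : p^2 < (Real.sqrt 3 * q)^2 := by
      rw [mul_pow, Real.sq_sqrt (by norm_num : (0:ℝ) ≤ 3), hp2, hq2]
      have h7 : 3*(t*(2*SD + 2 - t)/4) - t*(2*SD + t - 2)/4 = t*(SD + 2 - t) := by ring
      have h8 : 0 < t*(SD + 2 - t) := mul_pos ht0 (by linarith)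
      linarith
    exact lt_of_pow_lt_pow_left₀ 2 (by positivity) hlt
  have hXCf : X = Cf t := by
    have hXnn : 0 ≤ X := by
      rw [hXdef]
      apply div_nonneg (mul_nonneg hsinφ.le (by linarith)) (by positivity)
    rw [← Real.sqrt_sq hXnn]
    unfold Cf D
    rw [← hSDdef', hX2]
  have hYBf : Y = Bf t := by
    have hYnn : 0 ≤ Y := by
      rw [hYdef]
      have : 0 ≤ Real.sqrt 3 * p + q := by positivity
      positivity
    rw [← Real.sqrt_sq hYnn]
    unfold Bf D
    rw [← hSDdef', hY2]
  constructor
  · rw [hreD, ← htdef]; exact hXCf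
  · rw [himD, ← htdef]; exact hYBf


end DRIB

open DRIB in
theorem deriv_re_im_branch_strictAnti (β : ℝ → ℂ)
    (hβ0 : β 0 = 0)
    (hcont : ContinuousOn β (Icc 0 π))
    (hdiff : ∀ φ ∈ Ioo (0 : ℝ) π, DifferentiableAt ℝ β φ)
    (hcos : ∀ φ ∈ Icc (0 : ℝ) π, Complex.cos (β φ) =
      1 + ((Real.cos φ : ℂ) - 1) * Complex.exp (2 * Real.pi * Complex.I / 3))
    (him : ∀ φ ∈ Ioo (0 : ℝ) π, 0 < (β φ).im) :
    StrictAntiOn (deriv fun φ => (β φ).re) (Ioo 0 π) ∧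
      StrictAntiOn (deriv fun φ => (β φ).im) (Ioo 0 π) ∧
      Tendsto (deriv fun φ => (β φ).re) (𝓝[>] 0) (𝓝 (1 / 2)) ∧
      Tendsto (deriv fun φ => (β φ).re) (𝓝[<] π) (𝓝 0) ∧
      Tendsto (deriv fun φ => (β φ).im) (𝓝[>] 0) (𝓝 (Real.sqrt 3 / 2)) ∧
      Tendsto (deriv fun φ => (β φ).im) (𝓝[<] π) (𝓝 0) := by
  have hmem2 : ∀ x ∈ Ioo (0:ℝ) π, 1 - Real.cos x ∈ Icc (0:ℝ) 2 := fun x hx =>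
    ⟨by linarith [Real.cos_le_one x], by linarith [Real.neg_one_le_cos x]⟩
  have hlt : ∀ x ∈ Ioo (0:ℝ) π, ∀ y ∈ Ioo (0:ℝ) π, x < y →
      1 - Real.cos x < 1 - Real.cos y := by
    intro x hx y hy hxy
    have := Real.strictAntiOn_cos ⟨hx.1.le, hx.2.le⟩ ⟨hy.1.le, hy.2.le⟩ hxy
    linarith
  have hD := fun {x} (hx : x ∈ Ioo (0:ℝ) π) => DRIB.deriv_eq β hdiff hcos him hx
  have hc0 : Tendsto (fun x : ℝ => 1 - Real.cos x) (𝓝[>] (0:ℝ)) (𝓝 0) := by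
    have h1 : Continuous (fun x : ℝ => 1 - Real.cos x) := by continuity
    have h2 : Tendsto (fun x : ℝ => 1 - Real.cos x) (𝓝[>] (0:ℝ)) (𝓝 (1 - Real.cos 0)) :=
      (h1.tendsto 0).mono_left nhdsWithin_le_nhds
    simpa using h2
  have hcπ : Tendsto (fun x : ℝ => 1 - Real.cos x) (𝓝[<] π) (𝓝 2) := by
    have h1 : Continuous (fun x : ℝ => 1 - Real.cos x) := by continuity
    have h2 : Tendsto (fun x : ℝ => 1 - Real.cos x) (𝓝[<] π) (𝓝 (1 - Real.cos π)) :=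
      (h1.tendsto π).mono_left nhdsWithin_le_nhds
    norm_num [Real.cos_pi] at h2
    exact h2
  have hmem0 : Ioo (0:ℝ) π ∈ 𝓝[>] (0:ℝ) :=
    Ioo_mem_nhdsGT_of_mem (left_mem_Ico.2 Real.pi_pos)
  have hmemπ : Ioo (0:ℝ) π ∈ 𝓝[<] π :=
    Ioo_mem_nhdsLT_of_mem (right_mem_Ioc.2 Real.pi_pos)
  refine ⟨?_, ?_, ?_, ?_, ?_, ?_⟩
  · intro x hx y hy hxy
    rw [(hD hx).1, (hD hy).1]
    exact Cf_strictAnti (hmem2 x hx) (hmem2 y hy) (hlt x hx y hy hxy)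
  · intro x hx y hy hxy
    rw [(hD hx).2, (hD hy).2]
    exact Bf_strictAnti (hmem2 x hx) (hmem2 y hy) (hlt x hx y hy hxy)
  · have h0 : Tendsto (fun x : ℝ => Cf (1 - Real.cos x)) (𝓝[>] (0:ℝ)) (𝓝 (1/2)) := by
      have := (Cf_contAt 0).tendsto.comp hc0
      rwa [Cf_zero] at this
    apply h0.congr'
    filter_upwards [hmem0] with x hx
    exact ((hD hx).1).symm
  · have h0 : Tendsto (fun x : ℝ => Cf (1 - Real.cos x)) (𝓝[<] π) (𝓝 0) := by
      have := (Cf_contAt 2).tendsto.comp hcπ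
      rwa [Cf_two] at this
    apply h0.congr'
    filter_upwards [hmemπ] with x hx
    exact ((hD hx).1).symm
  · have h0 : Tendsto (fun x : ℝ => Bf (1 - Real.cos x)) (𝓝[>] (0:ℝ)) (𝓝 (Real.sqrt 3/2)) := by
      have := (Bf_contAt 0).tendsto.comp hc0
      rwa [Bf_zero] at this
    apply h0.congr'
    filter_upwards [hmem0] with x hx
    exact ((hD hx).2).symm
  · have h0 : Tendsto (fun x : ℝ => Bf (1 - Real.cos x)) (𝓝[<] π) (𝓝 0) := by
      have := (Bf_contAt 2).tendsto.comp hcπ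
      rwa [Bf_two] at this
    apply h0.congr'
    filter_upwards [hmemπ] with x hx
    exact ((hD hx).2).symm
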